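/- Let (λ_k) satisfy c₀ k² ≤ λ_k for all k ≥ 1 (c₀ > 0) and fix δ > 0. Then there exists a constant K > 0 (depending only on c₀ and δ) such that for every m ≥ 2, (2/π) ∑_{k=1}^m (∫_0^δ (√λ_k e^{-λ_k t}/√2) · |c(t)|^{-1} dt)² ≥ K ∑_{k=1}^m λ_k^{-1/2}, where |c(t)| = (∑_{j=1}^m (1-e^{-2λ_j t})/(2λ_j))^{1/2}. -/

import Mathlib

open MeasureTheory Real intervalIntegral

lemma tail_sq (N : ℕ) (hN : 1 ≤ N) : ∀ m : ℕ, ∑ j ∈ Finset.Ioc N m, ((j:ℝ)^2)⁻¹ ≤ (N:ℝ)⁻¹ := by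
  have key : ∀ m : ℕ, N ≤ m → ∑ j ∈ Finset.Ioc N m, ((j:ℝ)^2)⁻¹ ≤ (N:ℝ)⁻¹ - (m:ℝ)⁻¹ := by
    intro m hm
    induction m, hm using Nat.le_induction with
    | base => simp
    | succ n hn ih =>
      rw [Finset.sum_Ioc_succ_top (by omega)]
      have h1 : (0:ℝ) < n := by exact_mod_cast Nat.lt_of_lt_of_le Nat.zero_lt_one (hN.trans hn)
      have h2 : ((n:ℝ)+1)⁻¹ * ((n:ℝ)+1)⁻¹ ≤ (n:ℝ)⁻¹ - ((n:ℝ)+1)⁻¹ := by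
        rw [inv_sub_inv (by positivity) (by positivity)]
        rw [div_eq_mul_inv, mul_inv]
        have : (n:ℝ) + 1 - n = 1 := by ring
        rw [this, one_mul]
        gcongr ?_ * _
        · exact inv_anti₀ h1 (by linarith)
      have : (((n:ℝ)+1)^2)⁻¹ = ((n:ℝ)+1)⁻¹ * ((n:ℝ)+1)⁻¹ := by rw [sq, mul_inv]
      push_cast
      push_cast at ih
      linarith [ih]
  intro m
  rcases le_or_gt N m with h | h
  · have := key m h
    have hm : (0:ℝ) < m := by exact_mod_cast Nat.lt_of_lt_of_le Nat.zero_lt_one (hN.trans h)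
    have : (0:ℝ) ≤ (m:ℝ)⁻¹ := by positivity
    linarith [key m h]
  · rw [Finset.Ioc_eq_empty (by omega)]
    simp [inv_nonneg]

lemma Fint (b : ℝ) (hb : 0 ≤ b) :
    IntervalIntegrable (fun s => s ^ (-(1/4):ℝ) * Real.exp (-s)) volume 0 b := by
  rw [intervalIntegrable_iff, Set.uIoc_of_le hb]
  apply Integrable.mono' ((intervalIntegrable_rpow' (r := -(1/4)) (by norm_num)).1)
  · exact (by fun_prop : Measurable fun s : ℝ => s ^ (-(1/4):ℝ) * Real.exp (-s)).aestronglyMeasurable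
  · rw [ae_restrict_iff' measurableSet_Ioc]
    filter_upwards with s hs
    have h1 : 0 < s := hs.1
    rw [Real.norm_eq_abs, abs_of_nonneg (by positivity)]
    nth_rewrite 2 [← mul_one (s ^ (-(1/4):ℝ))]
    gcongr
    exact Real.exp_le_one_iff.mpr (by linarith)

lemma Fint2 (L b : ℝ) (hL : 0 < L) (hb : 0 ≤ b) :
    IntervalIntegrable (fun t => t ^ (-(1/4):ℝ) * Real.exp (-(L*t))) volume 0 b := by
  rw [intervalIntegrable_iff, Set.uIoc_of_le hb]
  apply Integrable.mono' ((intervalIntegrable_rpow' (r := -(1/4)) (by norm_num)).1)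
  · exact (by fun_prop : Measurable fun t : ℝ => t ^ (-(1/4):ℝ) * Real.exp (-(L*t))).aestronglyMeasurable
  · rw [ae_restrict_iff' measurableSet_Ioc]
    filter_upwards with s hs
    have h1 : 0 < s := hs.1
    rw [Real.norm_eq_abs, abs_of_nonneg (by positivity)]
    nth_rewrite 2 [← mul_one (s ^ (-(1/4):ℝ))]
    gcongr
    exact Real.exp_le_one_iff.mpr (by nlinarith)

lemma sub_int (L c₀ δ : ℝ) (hc₀ : 0 < c₀) (hδ : 0 < δ) (hL : c₀ ≤ L) :
    L ^ (-(3/4):ℝ) * ∫ s in (0:ℝ)..(c₀*δ), s ^ (-(1/4):ℝ) * Real.exp (-s)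
      ≤ ∫ t in (0:ℝ)..δ, t ^ (-(1/4):ℝ) * Real.exp (-(L*t)) := by
  have hL0 : 0 < L := lt_of_lt_of_le hc₀ hL
  have heq : (∫ t in (0:ℝ)..δ, t ^ (-(1/4):ℝ) * Real.exp (-(L*t)))
      = L ^ ((1/4):ℝ) * ∫ t in (0:ℝ)..δ, (L*t) ^ (-(1/4):ℝ) * Real.exp (-(L*t)) := by
    rw [← intervalIntegral.integral_const_mul]
    apply intervalIntegral.integral_congr
    intro t ht
    rw [Set.uIcc_of_le hδ.le] at ht
    rcases eq_or_lt_of_le ht.1 with h | h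
    · simp [← h, Real.zero_rpow (by norm_num : (-(1/4):ℝ) ≠ 0)]
    · have hmr : (L*t) ^ (-(1/4):ℝ) = L ^ (-(1/4):ℝ) * t ^ (-(1/4):ℝ) :=
        Real.mul_rpow hL0.le h.le
      show t ^ (-(1/4):ℝ) * Real.exp (-(L*t))
          = L ^ ((1/4):ℝ) * ((L*t) ^ (-(1/4):ℝ) * Real.exp (-(L*t)))
      rw [hmr, ← mul_assoc, ← mul_assoc, ← Real.rpow_add hL0]
      norm_num
  rw [heq, intervalIntegral.integral_comp_mul_left
      (fun s => s ^ (-(1/4):ℝ) * Real.exp (-s)) hL0.ne', mul_zero, smul_eq_mul, ← mul_assoc]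
  have hcoef : L ^ ((1/4):ℝ) * L⁻¹ = L ^ (-(3/4):ℝ) := by
    rw [← Real.rpow_neg_one L, ← Real.rpow_add hL0]; norm_num
  rw [hcoef]
  apply mul_le_mul_of_nonneg_left _ (by positivity)
  exact intervalIntegral.integral_mono_interval le_rfl (by positivity) (by nlinarith)
      (by
        filter_upwards [ae_restrict_mem measurableSet_Ioc] with s hs
        have h1 : (0:ℝ) < s := hs.1
        positivity)
      (Fint _ (by positivity))

lemma Bpos (b : ℝ) (hb : 0 < b) :
    0 < ∫ s in (0:ℝ)..b, s ^ (-(1/4):ℝ) * Real.exp (-s) := by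
  have h1 : 0 < ∫ s in (b/2)..b, s ^ (-(1/4):ℝ) * Real.exp (-s) := by
    apply intervalIntegral.integral_pos (by linarith)
    · apply ContinuousOn.mul
      · apply ContinuousOn.rpow_const continuousOn_id
        intro x hx
        exact Or.inl (ne_of_gt (lt_of_lt_of_le (by linarith) hx.1))
      · exact (Real.continuous_exp.comp continuous_neg).continuousOn
    · intro x hx
      have : 0 < x := lt_of_lt_of_le (by linarith) hx.1.le
      positivity
    · exact ⟨b, ⟨by linarith, le_rfl⟩, by positivity⟩
  have h2 : (∫ s in (b/2)..b, s ^ (-(1/4):ℝ) * Real.exp (-s))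
      ≤ ∫ s in (0:ℝ)..b, s ^ (-(1/4):ℝ) * Real.exp (-s) := by
    apply intervalIntegral.integral_mono_interval (by linarith) (by linarith) le_rfl
    · filter_upwards [ae_restrict_mem measurableSet_Ioc] with s hs
      have h1 : (0:ℝ) < s := hs.1
      positivity
    · exact Fint b hb.le
  linarith

lemma exp_lb (c δ t : ℝ) (hδ : 0 < δ) (ht : 0 ≤ t) (htδ : t ≤ δ) :
    (t/δ) * (1 - Real.exp (-(c*δ))) ≤ 1 - Real.exp (-(c*t)) := by
  have hs0 : 0 ≤ t/δ := by positivity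
  have hs1 : t/δ ≤ 1 := by rw [div_le_one hδ]; exact htδ
  have hcv := convexOn_exp.2 (Set.mem_univ (0:ℝ)) (Set.mem_univ (-(c*δ)))
    (by linarith : (0:ℝ) ≤ 1 - t/δ) hs0 (by ring)
  simp only [smul_eq_mul, mul_zero, zero_add, Real.exp_zero, mul_one] at hcv
  have harg : (t/δ) * (-(c*δ)) = -(c*t) := by field_simp
  rw [harg] at hcv
  nlinarith [hcv]

set_option maxHeartbeats 1000000 in
lemma cbound (lam : ℕ → ℝ) (hpos : ∀ k : ℕ, 1 ≤ k → 0 < lam k)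
    (c₀ : ℝ) (hc₀ : 0 < c₀)
    (hlow : ∀ k : ℕ, 1 ≤ k → c₀ * (k : ℝ) ^ 2 ≤ lam k)
    (δ : ℝ) (m : ℕ) (t : ℝ) (ht : 0 < t) (htδ : t ≤ δ) :
    ∑ j ∈ Finset.Icc 1 m, (1 - Real.exp (-2*lam j*t))/(2*lam j)
      ≤ (2/Real.sqrt (2*c₀) + Real.sqrt δ) * Real.sqrt t := by
  set a := Real.sqrt (2*c₀) with hadef
  have ha : 0 < a := Real.sqrt_pos.mpr (by linarith)
  have ha2 : a^2 = 2*c₀ := Real.sq_sqrt (by linarith)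
  set st := Real.sqrt t with hstdef
  have hst : 0 < st := Real.sqrt_pos.mpr ht
  have hst2 : st^2 = t := Real.sq_sqrt ht.le
  have hstδ : st ≤ Real.sqrt δ := Real.sqrt_le_sqrt htδ
  set N : ℕ := ⌈(a*st)⁻¹⌉₊ with hNdef
  have hN1 : 1 ≤ N := Nat.one_le_iff_ne_zero.mpr (by
    simp only [hNdef, ne_eq, Nat.ceil_eq_zero, not_le]
    positivity)
  have hNub : (N:ℝ) ≤ (a*st)⁻¹ + 1 := le_of_lt (Nat.ceil_lt_add_one (by positivity))
  have hNlb : (a*st)⁻¹ ≤ (N:ℝ) := Nat.le_ceil _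
  -- termwise bounds
  have hterm : ∀ j ∈ Finset.Icc 1 m,
      (1 - Real.exp (-2*lam j*t))/(2*lam j)
        ≤ if j ≤ N then t else (2*c₀)⁻¹ * ((j:ℝ)^2)⁻¹ := by
    intro j hj
    have hj1 : 1 ≤ j := (Finset.mem_Icc.mp hj).1
    have hlj : 0 < lam j := hpos j hj1
    have hljl : c₀ * (j:ℝ)^2 ≤ lam j := hlow j hj1
    have hjr : (1:ℝ) ≤ (j:ℝ) := by exact_mod_cast hj1
    by_cases h : j ≤ N
    · rw [if_pos h]
      rw [div_le_iff₀ (by positivity)]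
      have := Real.add_one_le_exp (-(2*lam j*t))
      have he : 1 - (2*lam j*t) ≤ Real.exp (-2*lam j*t) := by
        rw [show (-2*lam j*t) = -(2*lam j*t) by ring]; linarith
      nlinarith
    · rw [if_neg h]
      have hnum : 1 - Real.exp (-2*lam j*t) ≤ 1 := by
        have := Real.exp_pos (-2*lam j*t); linarith
      have hnn : 0 ≤ 1 - Real.exp (-2*lam j*t) := by
        have : Real.exp (-2*lam j*t) ≤ 1 := Real.exp_le_one_iff.mpr (by nlinarith)
        linarith
      calc (1 - Real.exp (-2*lam j*t))/(2*lam j) ≤ 1/(2*lam j) :=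
            (div_le_div_iff_of_pos_right (by positivity)).mpr hnum
        _ ≤ 1/(2*(c₀*(j:ℝ)^2)) := by
            apply one_div_le_one_div_of_le (by positivity)
            linarith
        _ = (2*c₀)⁻¹ * ((j:ℝ)^2)⁻¹ := by
            rw [one_div, mul_inv, mul_inv]; ring
  have hsplit := Finset.sum_le_sum hterm
  have hdecomp : (∑ i ∈ Finset.Icc 1 m, if i ≤ N then t else (2*c₀)⁻¹ * ((i:ℝ)^2)⁻¹)
      = (∑ j ∈ (Finset.Icc 1 m).filter (· ≤ N), if j ≤ N then t else (2*c₀)⁻¹ * ((j:ℝ)^2)⁻¹)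
        + (∑ j ∈ (Finset.Icc 1 m).filter (¬ · ≤ N), if j ≤ N then t else (2*c₀)⁻¹ * ((j:ℝ)^2)⁻¹) :=
    (Finset.sum_filter_add_sum_filter_not (Finset.Icc 1 m) (· ≤ N) _).symm
  -- first part
  have h1 : ∑ j ∈ (Finset.Icc 1 m).filter (· ≤ N), (if j ≤ N then t else (2*c₀)⁻¹ * ((j:ℝ)^2)⁻¹)
      ≤ (N:ℝ) * t := by
    have : ∀ j ∈ (Finset.Icc 1 m).filter (· ≤ N),
        (if j ≤ N then t else (2*c₀)⁻¹ * ((j:ℝ)^2)⁻¹) = t := by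
      intro j hj
      rw [if_pos (Finset.mem_filter.mp hj).2]
    rw [Finset.sum_congr rfl this, Finset.sum_const, nsmul_eq_mul]
    have hcard : ((Finset.Icc 1 m).filter (· ≤ N)).card ≤ N := by
      have hsub : (Finset.Icc 1 m).filter (· ≤ N) ⊆ Finset.Icc 1 N := by
        intro j hj
        simp only [Finset.mem_filter, Finset.mem_Icc] at *
        exact ⟨hj.1.1, hj.2⟩
      calc ((Finset.Icc 1 m).filter (· ≤ N)).card ≤ (Finset.Icc 1 N).card :=
            Finset.card_le_card hsub
        _ = N := by rw [Nat.card_Icc]; omega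
    have : (((Finset.Icc 1 m).filter (· ≤ N)).card : ℝ) ≤ (N:ℝ) := by exact_mod_cast hcard
    nlinarith
  -- second part
  have h2 : ∑ j ∈ (Finset.Icc 1 m).filter (¬ · ≤ N), (if j ≤ N then t else (2*c₀)⁻¹ * ((j:ℝ)^2)⁻¹)
      ≤ (2*c₀)⁻¹ * (N:ℝ)⁻¹ := by
    have heq : ∀ j ∈ (Finset.Icc 1 m).filter (¬ · ≤ N),
        (if j ≤ N then t else (2*c₀)⁻¹ * ((j:ℝ)^2)⁻¹) = (2*c₀)⁻¹ * ((j:ℝ)^2)⁻¹ := by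
      intro j hj
      rw [if_neg (by simpa using (Finset.mem_filter.mp hj).2)]
    rw [Finset.sum_congr rfl heq]
    have hsub : (Finset.Icc 1 m).filter (¬ · ≤ N) ⊆ Finset.Ioc N m := by
      intro j hj
      simp only [Finset.mem_filter, Finset.mem_Icc, Finset.mem_Ioc] at *
      omega
    calc ∑ j ∈ (Finset.Icc 1 m).filter (¬ · ≤ N), (2*c₀)⁻¹ * ((j:ℝ)^2)⁻¹
        ≤ ∑ j ∈ Finset.Ioc N m, (2*c₀)⁻¹ * ((j:ℝ)^2)⁻¹ := by
          apply Finset.sum_le_sum_of_subset_of_nonneg hsub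
          intro j _ _; positivity
      _ = (2*c₀)⁻¹ * ∑ j ∈ Finset.Ioc N m, ((j:ℝ)^2)⁻¹ := by rw [Finset.mul_sum]
      _ ≤ (2*c₀)⁻¹ * (N:ℝ)⁻¹ := by
          apply mul_le_mul_of_nonneg_left (tail_sq N hN1 m) (by positivity)
  -- combine
  have hNinv : (N:ℝ)⁻¹ ≤ a*st := by
    rw [← inv_inv (a*st)]
    apply inv_anti₀ (by positivity) hNlb
  have hNt : (N:ℝ)*t ≤ st/a + Real.sqrt δ * st := by
    have h3 : (N:ℝ)*t ≤ ((a*st)⁻¹ + 1) * t := by nlinarith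
    have h4 : ((a*st)⁻¹ + 1) * t = t/(a*st) + t := by ring
    have h5 : t/(a*st) = st/a := by
      rw [← hst2]; field_simp
    have h6 : t ≤ Real.sqrt δ * st := by nlinarith
    rw [h4, h5] at h3; linarith
  have h7 : (2*c₀)⁻¹ * (N:ℝ)⁻¹ ≤ st/a := by
    have : (2*c₀)⁻¹ * (a*st) = st/a := by
      rw [← ha2]; field_simp
    nlinarith [inv_pos.mpr (show (0:ℝ) < 2*c₀ by linarith)]
  have hfin : st/a + Real.sqrt δ * st + st/a = (2/a + Real.sqrt δ) * st := by ring
  linarith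

set_option maxHeartbeats 1600000 in
theorem stmt_10 (lam : ℕ → ℝ) (hpos : ∀ k : ℕ, 1 ≤ k → 0 < lam k)
    (c₀ : ℝ) (hc₀ : 0 < c₀)
    (hlow : ∀ k : ℕ, 1 ≤ k → c₀ * (k : ℝ) ^ 2 ≤ lam k)
    (δ : ℝ) (hδ : 0 < δ) :
    ∃ K : ℝ, 0 < K ∧ ∀ m : ℕ, 2 ≤ m →
      K * ∑ k ∈ Finset.Icc 1 m, 1 / Real.sqrt (lam k)
        ≤ (2 / π) * ∑ k ∈ Finset.Icc 1 m,
            (∫ t in (0:ℝ)..δ,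
              (Real.sqrt (lam k) * Real.exp (-lam k * t) / Real.sqrt 2) /
                Real.sqrt (∑ j ∈ Finset.Icc 1 m,
                  (1 - Real.exp (-2 * lam j * t)) / (2 * lam j))) ^ 2 := by
  set B := ∫ s in (0:ℝ)..(c₀*δ), s ^ (-(1/4):ℝ) * Real.exp (-s) with hBdef
  have hB : 0 < B := Bpos _ (by positivity)
  set C2 : ℝ := 2/Real.sqrt (2*c₀) + Real.sqrt δ with hC2def
  have hC2 : 0 < C2 := by
    have : 0 < Real.sqrt (2*c₀) := Real.sqrt_pos.mpr (by linarith)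
    have : 0 ≤ Real.sqrt δ := Real.sqrt_nonneg δ
    positivity
  set C := Real.sqrt C2 with hCdef
  have hC : 0 < C := Real.sqrt_pos.mpr hC2
  have hCsq : C^2 = C2 := Real.sq_sqrt hC2.le
  have hπ : 0 < π := Real.pi_pos
  refine ⟨B^2/(π*C2), by positivity, ?_⟩
  intro m hm
  have hl1 : 0 < lam 1 := hpos 1 le_rfl
  set a₁ : ℝ := (1 - Real.exp (-(2*lam 1*δ)))/(2*lam 1*δ) with ha₁def
  have hexpδ : Real.exp (-(2*lam 1*δ)) < 1 := Real.exp_lt_one_iff.mpr (by nlinarith)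
  have ha₁ : 0 < a₁ := div_pos (by linarith) (by positivity)
  have hmem1 : (1:ℕ) ∈ Finset.Icc 1 m := Finset.mem_Icc.mpr ⟨le_rfl, by omega⟩
  have htermnn : ∀ (t:ℝ), 0 ≤ t → ∀ j ∈ Finset.Icc 1 m,
      0 ≤ (1 - Real.exp (-2*lam j*t))/(2*lam j) := by
    intro t ht j hj
    have hlj := hpos j (Finset.mem_Icc.mp hj).1
    have : Real.exp (-2*lam j*t) ≤ 1 := Real.exp_le_one_iff.mpr (by nlinarith)
    apply div_nonneg (by linarith) (by positivity)
  have hSlb : ∀ t : ℝ, 0 < t → t ≤ δ →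
      a₁ * t ≤ ∑ j ∈ Finset.Icc 1 m, (1 - Real.exp (-2*lam j*t))/(2*lam j) := by
    intro t ht htδ
    have h1 : (1 - Real.exp (-2*lam 1*t))/(2*lam 1)
        ≤ ∑ j ∈ Finset.Icc 1 m, (1 - Real.exp (-2*lam j*t))/(2*lam j) :=
      Finset.single_le_sum (htermnn t ht.le) hmem1
    have h2 := exp_lb (2*lam 1) δ t hδ ht.le htδ
    have h4 : -(2*lam 1*t) = -2*lam 1*t := by ring
    rw [h4] at h2
    have h3 : a₁ * t = (t/δ) * (1 - Real.exp (-(2*lam 1*δ))) / (2*lam 1) := by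
      rw [ha₁def]; field_simp
    rw [h3]
    exact le_trans ((div_le_div_iff_of_pos_right (by positivity)).mpr h2) h1
  have hSub : ∀ t : ℝ, 0 < t → t ≤ δ →
      (∑ j ∈ Finset.Icc 1 m, (1 - Real.exp (-2*lam j*t))/(2*lam j)) ≤ C2 * Real.sqrt t := by
    intro t ht htδ
    have := cbound lam hpos c₀ hc₀ hlow δ m t ht htδ
    linarith
  -- per-k key inequality
  have key : ∀ k ∈ Finset.Icc 1 m,
      (B^2/(2*C2)) * (1/Real.sqrt (lam k))
        ≤ (∫ t in (0:ℝ)..δ,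
              (Real.sqrt (lam k) * Real.exp (-lam k * t) / Real.sqrt 2) /
                Real.sqrt (∑ j ∈ Finset.Icc 1 m,
                  (1 - Real.exp (-2 * lam j * t)) / (2 * lam j))) ^ 2 := by
    intro k hk
    have hk1 : 1 ≤ k := (Finset.mem_Icc.mp hk).1
    have hL0 : 0 < lam k := hpos k hk1
    have hk1r : (1:ℝ) ≤ (k:ℝ) := by exact_mod_cast hk1
    have hksq : (1:ℝ) ≤ (k:ℝ)^2 := by nlinarith
    have hcL : c₀ ≤ lam k := le_trans (by nlinarith) (hlow k hk1)
    set L := lam k with hLdef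
    set f : ℝ → ℝ := fun t =>
      (Real.sqrt L * Real.exp (-L * t) / Real.sqrt 2) /
        Real.sqrt (∑ j ∈ Finset.Icc 1 m,
          (1 - Real.exp (-2 * lam j * t)) / (2 * lam j)) with hfdef
    set g : ℝ → ℝ := fun t =>
      (Real.sqrt L / (Real.sqrt 2 * C)) * (t ^ (-(1/4):ℝ) * Real.exp (-(L * t))) with hgdef
    have hfnn : ∀ t : ℝ, 0 ≤ f t := by
      intro t
      apply div_nonneg _ (Real.sqrt_nonneg _)
      positivity
    -- integrability of f
    have hfint : IntervalIntegrable f volume 0 δ := by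
      rw [intervalIntegrable_iff, Set.uIoc_of_le hδ.le]
      set M : ℝ := (Real.sqrt L / Real.sqrt 2) * (Real.sqrt a₁)⁻¹ with hMdef
      apply Integrable.mono' (g := fun t => M * t ^ (-(1/2):ℝ))
        ((intervalIntegrable_rpow' (r := -(1/2)) (by norm_num)).const_mul M).1
      · apply Measurable.aestronglyMeasurable
        apply Measurable.div (by fun_prop)
        exact (Real.continuous_sqrt.comp (continuous_finset_sum _ fun j _ =>
          (continuous_const.sub (Real.continuous_exp.comp
            (continuous_const.mul continuous_id))).div_const _)).measurable
      · filter_upwards [ae_restrict_mem measurableSet_Ioc] with t ht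
        have hSl := hSlb t ht.1 ht.2
        have hSpos : 0 < ∑ j ∈ Finset.Icc 1 m, (1 - Real.exp (-2*lam j*t))/(2*lam j) :=
          lt_of_lt_of_le (mul_pos ha₁ ht.1) hSl
        rw [Real.norm_eq_abs, abs_of_nonneg (hfnn t)]
        have hstpos : 0 < Real.sqrt t := Real.sqrt_pos.mpr ht.1
        have hest : Real.exp (-L * t) ≤ 1 := Real.exp_le_one_iff.mpr (by nlinarith [mul_pos hL0 ht.1])
        have hden : Real.sqrt a₁ * Real.sqrt t
            ≤ Real.sqrt (∑ j ∈ Finset.Icc 1 m, (1 - Real.exp (-2*lam j*t))/(2*lam j)) := by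
          rw [← Real.sqrt_mul ha₁.le]
          exact Real.sqrt_le_sqrt hSl
        have h5 : t ^ (-(1/2):ℝ) = (Real.sqrt t)⁻¹ := by
          rw [Real.rpow_neg ht.1.le, Real.sqrt_eq_rpow]
        calc f t ≤ (Real.sqrt L / Real.sqrt 2) / (Real.sqrt a₁ * Real.sqrt t) := by
              apply div_le_div₀ (by positivity) _ (by positivity) hden
              exact (div_le_div_iff_of_pos_right (by positivity)).mpr
                (mul_le_of_le_one_right (Real.sqrt_nonneg L) hest)
          _ = M * t ^ (-(1/2):ℝ) := by
              rw [h5, hMdef]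
              field_simp
    have hgint : IntervalIntegrable g volume 0 δ :=
      (Fint2 L δ hL0 hδ.le).const_mul _
    have hle : ∀ t ∈ Set.Icc (0:ℝ) δ, g t ≤ f t := by
      intro t ht
      rcases eq_or_lt_of_le ht.1 with h0 | h0
      · have hg0 : g 0 = 0 := by
          simp [hgdef, Real.zero_rpow (by norm_num : (-(1/4):ℝ) ≠ 0)]
        rw [← h0, hg0]
        exact hfnn 0
      · have hSl := hSlb t h0 ht.2
        have hSpos : 0 < ∑ j ∈ Finset.Icc 1 m, (1 - Real.exp (-2*lam j*t))/(2*lam j) :=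
          lt_of_lt_of_le (mul_pos ha₁ h0) hSl
        have hden2 : Real.sqrt (∑ j ∈ Finset.Icc 1 m, (1 - Real.exp (-2*lam j*t))/(2*lam j))
            ≤ C * t ^ ((1/4):ℝ) := by
          have h6 : Real.sqrt (Real.sqrt t) = t ^ ((1/4):ℝ) := by
            rw [Real.sqrt_eq_rpow t, Real.sqrt_eq_rpow, ← Real.rpow_mul h0.le]
            norm_num
          calc Real.sqrt (∑ j ∈ Finset.Icc 1 m, (1 - Real.exp (-2*lam j*t))/(2*lam j))
              ≤ Real.sqrt (C2 * Real.sqrt t) := Real.sqrt_le_sqrt (hSub t h0 ht.2)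
            _ = C * t ^ ((1/4):ℝ) := by rw [Real.sqrt_mul hC2.le, ← h6, hCdef]
        have hgeq : g t = (Real.sqrt L * Real.exp (-L * t) / Real.sqrt 2) / (C * t ^ ((1/4):ℝ)) := by
          have hexp' : Real.exp (-(L*t)) = Real.exp (-L * t) := by ring_nf
          rw [hgdef]
          simp only []
          rw [hexp', Real.rpow_neg h0.le]
          have ht4 : (0:ℝ) < t ^ ((1/4):ℝ) := Real.rpow_pos_of_pos h0 _
          field_simp
        rw [hgeq]
        show (Real.sqrt L * Real.exp (-L * t) / Real.sqrt 2) / (C * t ^ ((1/4):ℝ))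
          ≤ (Real.sqrt L * Real.exp (-L * t) / Real.sqrt 2) /
              Real.sqrt (∑ j ∈ Finset.Icc 1 m, (1 - Real.exp (-2 * lam j * t))/(2 * lam j))
        apply div_le_div_of_nonneg_left (by positivity) (Real.sqrt_pos.mpr hSpos) hden2
    have hmono : (∫ t in (0:ℝ)..δ, g t) ≤ ∫ t in (0:ℝ)..δ, f t :=
      intervalIntegral.integral_mono_on hδ.le hgint hfint hle
    have hgval : (∫ t in (0:ℝ)..δ, g t)
        = (Real.sqrt L / (Real.sqrt 2 * C)) * ∫ t in (0:ℝ)..δ, t ^ (-(1/4):ℝ) * Real.exp (-(L*t)) :=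
      intervalIntegral.integral_const_mul _ _
    have hφ := sub_int L c₀ δ hc₀ hδ hcL
    have hlower : (Real.sqrt L / (Real.sqrt 2 * C)) * (L ^ (-(3/4):ℝ) * B)
        ≤ ∫ t in (0:ℝ)..δ, f t := by
      refine le_trans ?_ hmono
      rw [hgval]
      apply mul_le_mul_of_nonneg_left _ (by positivity)
      rw [hBdef]
      exact hφ
    have hlnn : 0 ≤ (Real.sqrt L / (Real.sqrt 2 * C)) * (L ^ (-(3/4):ℝ) * B) := by positivity
    have hsq : ((Real.sqrt L / (Real.sqrt 2 * C)) * (L ^ (-(3/4):ℝ) * B))^2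
        = B^2/(2*C2) * (1/Real.sqrt L) := by
      have h2' : (Real.sqrt 2:ℝ)^2 = 2 := Real.sq_sqrt (by norm_num)
      have e1 : (Real.sqrt L)^2 = L := Real.sq_sqrt hL0.le
      have e2 : (L ^ (-(3/4):ℝ))^2 = L ^ (-(3/2):ℝ) := by
        rw [← Real.rpow_natCast (L ^ (-(3/4):ℝ)) 2, ← Real.rpow_mul hL0.le]
        norm_num
      have e3 : L * L ^ (-(3/2):ℝ) = (Real.sqrt L)⁻¹ := by
        nth_rewrite 1 [← Real.rpow_one L]
        rw [← Real.rpow_add hL0, Real.sqrt_eq_rpow, ← Real.rpow_neg hL0.le]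
        norm_num
      rw [mul_pow, div_pow, mul_pow, mul_pow, e1, e2, hCsq, h2']
      rw [show L/(2*C2) * (L ^ (-(3/2):ℝ) * B^2) = (L * L ^ (-(3/2):ℝ)) * B^2 / (2*C2) from by ring,
        e3, one_div]
      ring
    calc (B^2/(2*C2)) * (1/Real.sqrt L)
        = ((Real.sqrt L / (Real.sqrt 2 * C)) * (L ^ (-(3/4):ℝ) * B))^2 := hsq.symm
      _ ≤ (∫ t in (0:ℝ)..δ, f t)^2 := pow_le_pow_left₀ hlnn hlower 2
  have hsum := Finset.sum_le_sum key
  rw [← Finset.mul_sum] at hsum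
  calc B^2/(π*C2) * ∑ k ∈ Finset.Icc 1 m, 1/Real.sqrt (lam k)
      = (2/π) * ((B^2/(2*C2)) * ∑ k ∈ Finset.Icc 1 m, 1/Real.sqrt (lam k)) := by
        field_simp
    _ ≤ _ := mul_le_mul_of_nonneg_left hsum (by positivity)
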